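/- Let (P, σ, τ) be a perfume, let m := ord_P(σ) and L := 2m, let 2 ≤ J ≤ m, and define the J×L model matrix 𝓗_C = (c_{j,l}) over ZMod P by c_{j,l} := σ^{l−j} for 0 ≤ l < m and c_{j,l} := τ·σ^{l−j} for m ≤ l < L. Then the Tanner graph of the associated JP × LP binary QC-LDPC matrix H_C has girth at least 6. -/

import Mathlib

open Matrix

/-- The multiplicative order `ord_P(σ)` of `σ` modulo `P`. -/
noncomputable def ordP (P σ : ℕ) : ℕ := orderOf ((σ : ZMod P))

/-- `σ` is a fulfillment to `P`. -/
def IsFulfillment (P σ : ℕ) : Prop :=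
  Nat.Coprime σ P ∧ ∀ i : ℕ, 1 ≤ i → i < ordP P σ → Nat.Coprime (σ ^ i - 1) P

/-- A triple `(P, σ, τ)` of positive integers is a perfume. -/
def IsPerfume (P σ τ : ℕ) : Prop :=
  0 < P ∧ 0 < σ ∧ 0 < τ ∧ IsFulfillment P σ ∧ Nat.Coprime τ P ∧
    ∀ i : ℕ, 1 ≤ i → i ≤ ordP P σ → (τ : ZMod P) ≠ (σ : ZMod P) ^ i

/-- The circulant permutation matrix `I(b)` of size `P` over `F₂`. -/
def circPerm (P : ℕ) (b : ZMod P) : Matrix (Fin P) (Fin P) (ZMod 2) :=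
  Matrix.of fun j l => if ((l : ℕ) : ZMod P) - ((j : ℕ) : ZMod P) = b then 1 else 0

/-- The QC-LDPC matrix associated with a model matrix over `ZMod P`. -/
def qcMatrix' {P J L : ℕ} (c : Fin J → Fin L → ZMod P) :
    Matrix (Fin J × Fin P) (Fin L × Fin P) (ZMod 2) :=
  Matrix.of fun r s => circPerm P (c r.1 s.1) r.2 s.2

/-- The Tanner graph of a binary matrix `H`. -/
def tannerGraph {R C : Type*} (H : Matrix R C (ZMod 2)) : SimpleGraph (R ⊕ C) :=
  SimpleGraph.fromRel fun x y =>
    match x, y with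
    | Sum.inl r, Sum.inr s => H r s = 1
    | _, _ => False

section AuxPerfume

lemma map_range_succ' {V : Type*} (g : ℕ → V) (n : ℕ) :
    (List.range (n+1)).map g = g 0 :: (List.range n).map (fun i => g (i+1)) := by
  rw [List.range_succ_eq_map, List.map_cons, List.map_map]
  rfl

lemma chain_walk' {V : Type*} {G : SimpleGraph V} :
    ∀ (k : ℕ) (g : ℕ → V), (∀ i < k, G.Adj (g i) (g (i+1))) →
    ∃ w : G.Walk (g 0) (g k), w.length = k ∧ w.support = (List.range (k+1)).map g ∧
      w.edges = (List.range k).map (fun i => s(g i, g (i+1))) := by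
  intro k
  induction k with
  | zero => intro g _; exact ⟨.nil, rfl, by rw [map_range_succ' g 0]; simp, by simp⟩
  | succ k ih =>
    intro g hadj
    obtain ⟨w, hl, hs, he⟩ := ih (fun i => g (i+1)) (fun i hi => hadj (i+1) (by omega))
    refine ⟨.cons (hadj 0 (by omega)) w, by simp [hl], ?_, ?_⟩
    · rw [SimpleGraph.Walk.support_cons, hs, map_range_succ' g (k+1)]
    · rw [SimpleGraph.Walk.edges_cons, he, map_range_succ' (fun i => s(g i, g (i+1))) k]

lemma not_acyclic_of_chain' {V : Type*} {G : SimpleGraph V} (g : ℕ → V) (n : ℕ) (hn : 3 ≤ n)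
    (hadj : ∀ i < n, G.Adj (g i) (g (i + 1))) (hclose : g n = g 0)
    (hinj : ∀ i j, i ≤ n → j ≤ n → g i = g j → i = j ∨ (i = 0 ∧ j = n) ∨ (i = n ∧ j = 0)) :
    ¬ G.IsAcyclic := by
  obtain ⟨w, hl, hs, he⟩ := chain_walk' n g hadj
  intro hac
  refine hac (w.copy rfl hclose) ?_
  rw [SimpleGraph.Walk.isCycle_def]
  refine ⟨(SimpleGraph.Walk.isTrail_def _).2 ?_, ?_, ?_⟩
  · rw [SimpleGraph.Walk.edges_copy, he]
    refine List.Nodup.map_on ?_ (List.nodup_range (n := n))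
    intro i hi j hj hfe
    rw [List.mem_range] at hi hj
    rcases Sym2.eq_iff.1 hfe with ⟨h1, h2⟩ | ⟨h1, h2⟩
    · rcases hinj i j (by omega) (by omega) h1 with h | ⟨_, h⟩ | ⟨h, _⟩ <;> omega
    · rcases hinj i (j+1) (by omega) (by omega) h1 with hA | ⟨hA1, hA2⟩ | ⟨hA1, hA2⟩
      · rcases hinj (i+1) j (by omega) (by omega) h2 with hB | ⟨hB1, hB2⟩ | ⟨hB1, hB2⟩ <;> omega
      · rcases hinj (i+1) j (by omega) (by omega) h2 with hB | ⟨hB1, hB2⟩ | ⟨hB1, hB2⟩ <;> omega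
      · omega
  · intro hnil
    have := congrArg SimpleGraph.Walk.length hnil
    rw [SimpleGraph.Walk.length_copy, hl] at this
    simp at this
    omega
  · rw [SimpleGraph.Walk.support_copy, hs, map_range_succ' g n, List.tail_cons]
    refine List.Nodup.map_on ?_ (List.nodup_range (n := n))
    intro i hi j hj heq
    rw [List.mem_range] at hi hj
    rcases hinj (i+1) (j+1) (by omega) (by omega) heq with h | ⟨h1, h2⟩ | ⟨h1, h2⟩ <;> omega

lemma tanner_adj_iff {R C : Type*} (H : Matrix R C (ZMod 2)) (x y : R ⊕ C) :
    (tannerGraph H).Adj x y ↔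
      ((∃ r s, x = Sum.inl r ∧ y = Sum.inr s ∧ H r s = 1) ∨
       (∃ r s, x = Sum.inr s ∧ y = Sum.inl r ∧ H r s = 1)) := by
  cases x <;> cases y <;>
    simp [tannerGraph, SimpleGraph.fromRel_adj]

lemma tanner_parity {R C : Type*} (H : Matrix R C (ZMod 2)) {x y : R ⊕ C}
    (w : (tannerGraph H).Walk x y) :
    (Sum.elim (fun _ => (0:ZMod 2)) (fun _ => (1:ZMod 2)) x) + (w.length : ZMod 2)
      = Sum.elim (fun _ => (0:ZMod 2)) (fun _ => (1:ZMod 2)) y := by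
  induction w with
  | nil => simp
  | cons h p ih =>
    rename_i a b cc
    rw [SimpleGraph.Walk.length_cons]
    push_cast
    have hstep : Sum.elim (fun _ => (0:ZMod 2)) (fun _ => (1:ZMod 2)) b
        = Sum.elim (fun _ => (0:ZMod 2)) (fun _ => (1:ZMod 2)) a + 1 := by
      rcases (tanner_adj_iff H a b).1 h with ⟨r, s, rfl, rfl, _⟩ | ⟨r, s, rfl, rfl, _⟩
      · simp
      · simp; decide
    rw [← ih, hstep]; ring

lemma tanner_entry_iff {P J L : ℕ} (c : Fin J → Fin L → ZMod P)
    (r : Fin J × Fin P) (s : Fin L × Fin P) :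
    qcMatrix' c r s = 1 ↔ (((s.2 : ℕ) : ZMod P) - ((r.2 : ℕ) : ZMod P) = c r.1 s.1) := by
  show (if ((s.2 : ℕ) : ZMod P) - ((r.2 : ℕ) : ZMod P) = c r.1 s.1 then (1:ZMod 2) else 0) = 1 ↔ _
  constructor
  · intro h1
    by_contra hne
    rw [if_neg hne] at h1
    exact absurd h1 (by decide)
  · intro h1; rw [if_pos h1]

/-- Algebraic core: impossibility of the 4-cycle equation. -/
lemma perfume_core {P m : ℕ} (u v t : ZMod P)
    (hvu : v * u = 1) (huv : u * v = 1)
    (hpow_inj : ∀ a b, a < m → b < m → u ^ a = u ^ b → a = b)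
    (hunit_sub : ∀ d, 1 ≤ d → d < m → IsUnit (u ^ d - 1))
    (hured : ∀ a, m ≤ a → u ^ a = u ^ (a - m))
    (ht : IsUnit t) (hv : IsUnit v)
    (noTau : ∀ a b, a < m → b < m → t = u ^ a * v ^ b → False) :
    ∀ (ja jb la lb : ℕ) (El El' : ZMod P),
      ja < jb → jb < m → la ≠ lb → la < 2*m → lb < 2*m →
      (El = 1 ∧ la < m ∨ El = t ∧ m ≤ la) →
      (El' = 1 ∧ lb < m ∨ El' = t ∧ m ≤ lb) →
      El * (u ^ la * v ^ ja) + El' * (u ^ lb * v ^ jb)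
        = El * (u ^ la * v ^ jb) + El' * (u ^ lb * v ^ ja) → False := by
  intro ja jb la lb El El' hjab hjbm hlab hla2 hlb2 hEl hEl' heq
  obtain ⟨d, rfl⟩ : ∃ d, jb = ja + (d+1) := ⟨jb - ja - 1, by omega⟩
  have hvu1 : v ^ (d+1) * u ^ (d+1) = 1 := by rw [← mul_pow, hvu, one_pow]
  have h4 : ((El * u ^ la - El' * u ^ lb) * v ^ ja * v ^ (d+1)) * (u ^ (d+1) - 1) = 0 := by
    linear_combination heq + (El * u ^ la - El' * u ^ lb) * v ^ ja * hvu1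
  have hu1 : IsUnit (u ^ (d+1) - 1) := hunit_sub (d+1) (by omega) (by omega)
  have h6 := (IsUnit.mul_left_eq_zero hu1).mp h4
  have h7 := (IsUnit.mul_left_eq_zero (hv.pow (d+1))).mp h6
  have h8 := (IsUnit.mul_left_eq_zero (hv.pow ja)).mp h7
  have h5 : El * u ^ la = El' * u ^ lb := sub_eq_zero.mp h8
  rcases hEl with ⟨hE, hlam⟩ | ⟨hE, hlam⟩ <;> rcases hEl' with ⟨hE', hlbm⟩ | ⟨hE', hlbm⟩ <;>
    rw [hE, hE'] at h5
  · rw [one_mul, one_mul] at h5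
    exact hlab (hpow_inj la lb hlam hlbm h5)
  · rw [one_mul, hured lb hlbm] at h5
    have hc1 : u ^ (lb - m) * v ^ (lb - m) = 1 := by rw [← mul_pow, huv, one_pow]
    have hT : t = u ^ la * v ^ (lb - m) := by
      linear_combination -v ^ (lb - m) * h5 - t * hc1
    exact noTau la (lb - m) hlam (by omega) hT
  · rw [one_mul, hured la hlam] at h5
    have hc1 : u ^ (la - m) * v ^ (la - m) = 1 := by rw [← mul_pow, huv, one_pow]
    have hT : t = u ^ lb * v ^ (la - m) := by
      linear_combination v ^ (la - m) * h5 - t * hc1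
    exact noTau lb (la - m) hlbm (by omega) hT
  · have h5' : u ^ la = u ^ lb := ht.mul_left_cancel h5
    rw [hured la hlam, hured lb hlbm] at h5'
    have := hpow_inj (la - m) (lb - m) (by omega) (by omega) h5'
    omega

end AuxPerfume


set_option maxHeartbeats 3200000 in
/-- Main auxiliary lemma: all hypotheses stated abstractly. -/
lemma perfume_girth_aux {P m J : ℕ} [NeZero P] (hJ : 2 ≤ J) (hJm : J ≤ m) (hm2 : 2 ≤ m)
    (u v t : ZMod P) (huv : u * v = 1) (hvu : v * u = 1) (ht : IsUnit t) (hv : IsUnit v)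
    (hpow_inj : ∀ a b, a < m → b < m → u ^ a = u ^ b → a = b)
    (hunit_sub : ∀ d, 1 ≤ d → d < m → IsUnit (u ^ d - 1))
    (hured : ∀ a, m ≤ a → u ^ a = u ^ (a - m))
    (noTau : ∀ a b, a < m → b < m → t = u ^ a * v ^ b → False)
    (c : Fin J → Fin (2 * m) → ZMod P)
    (cE : ∀ j l, c j l = (if (l : ℕ) < m then (1:ZMod P) else t) * (u ^ (l:ℕ) * v ^ (j:ℕ))) :
    6 ≤ (tannerGraph (qcMatrix' c)).girth := by
  -- no 4-cycle equation
  have key0 : ∀ (j j' : Fin J) (l l' : Fin (2 * m)), (j : ℕ) < (j' : ℕ) → (l : ℕ) ≠ (l' : ℕ) →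
      c j l + c j' l' = c j l' + c j' l → False := by
    intro j j' l l' hjj hll heq
    rw [cE j l, cE j' l', cE j l', cE j' l] at heq
    refine perfume_core u v t hvu huv hpow_inj hunit_sub hured ht hv noTau
      (j : ℕ) (j' : ℕ) (l : ℕ) (l' : ℕ)
      (if (l : ℕ) < m then (1:ZMod P) else t) (if (l' : ℕ) < m then (1:ZMod P) else t)
      hjj (lt_of_lt_of_le j'.isLt hJm) hll l.isLt l'.isLt ?_ ?_ (by linear_combination heq)
    · by_cases hx : (l : ℕ) < m
      · exact Or.inl ⟨if_pos hx, hx⟩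
      · exact Or.inr ⟨if_neg hx, not_lt.1 hx⟩
    · by_cases hx : (l' : ℕ) < m
      · exact Or.inl ⟨if_pos hx, hx⟩
      · exact Or.inr ⟨if_neg hx, not_lt.1 hx⟩
  have keyNe : ∀ (j j' : Fin J) (l l' : Fin (2 * m)), (j : ℕ) ≠ (j' : ℕ) → (l : ℕ) ≠ (l' : ℕ) →
      c j l + c j' l' ≠ c j l' + c j' l := by
    intro j j' l l' hjj hll heq
    rcases lt_or_gt_of_ne hjj with hlt | hlt
    · exact key0 j j' l l' hlt hll heq
    · exact key0 j' j l l' hlt hll (by linear_combination -heq)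
  -- Fin cast injectivity
  have hfin : ∀ (p p' : Fin P), ((p : ℕ) : ZMod P) = ((p' : ℕ) : ZMod P) → p = p' := by
    intro p p' hpp
    have := congrArg ZMod.val hpp
    rw [ZMod.val_cast_of_lt p.isLt, ZMod.val_cast_of_lt p'.isLt] at this
    exact Fin.ext this
  -- no combinatorial 4-cycle
  have main4 : ∀ (r r' : Fin J × Fin P) (s s' : Fin (2 * m) × Fin P), r ≠ r' → s ≠ s' →
      qcMatrix' c r s = 1 → qcMatrix' c r s' = 1 → qcMatrix' c r' s = 1 →
      qcMatrix' c r' s' = 1 → False := by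
    intro r r' s s' hr hs e1 e2 e3 e4
    rw [tanner_entry_iff] at e1 e2 e3 e4
    by_cases hj : r.1 = r'.1
    · rw [hj] at e1
      have h1 := e1.trans e3.symm
      have hp : r.2 = r'.2 := hfin _ _ (by linear_combination -h1)
      exact hr (Prod.ext hj hp)
    · by_cases hl : s.1 = s'.1
      · rw [hl] at e1
        have h1 := e1.trans e2.symm
        have hq : s.2 = s'.2 := hfin _ _ (by linear_combination h1)
        exact hs (Prod.ext hl hq)
      · have heq : c r.1 s.1 + c r'.1 s'.1 = c r.1 s'.1 + c r'.1 s.1 := by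
          linear_combination e2 + e3 - e1 - e4
        exact keyNe r.1 r'.1 s.1 s'.1 (fun hh => hj (Fin.ext hh)) (fun hh => hl (Fin.ext hh)) heq
  -- directed adjacency helpers
  have hadjRL : ∀ (rr : Fin J × Fin P) (x), (tannerGraph (qcMatrix' c)).Adj (Sum.inl rr) x →
      ∃ ss, x = Sum.inr ss ∧ qcMatrix' c rr ss = 1 := by
    intro rr x hx
    rcases (tanner_adj_iff _ _ _).1 hx with ⟨r, s, h1, h2, h3⟩ | ⟨r, s, h1, h2, h3⟩
    · obtain rfl : rr = r := Sum.inl.inj h1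
      exact ⟨s, h2, h3⟩
    · exact absurd h1 (by simp)
  have hadjLR : ∀ (ss : Fin (2 * m) × Fin P) (x), (tannerGraph (qcMatrix' c)).Adj (Sum.inr ss) x →
      ∃ rr, x = Sum.inl rr ∧ qcMatrix' c rr ss = 1 := by
    intro ss x hx
    rcases (tanner_adj_iff _ _ _).1 hx with ⟨r, s, h1, h2, h3⟩ | ⟨r, s, h1, h2, h3⟩
    · exact absurd h1 (by simp)
    · obtain rfl : ss = s := Sum.inr.inj h1
      exact ⟨r, h2, h3⟩
  -- all cycles have length ≥ 6
  have hne6 : ∀ (a) (w : (tannerGraph (qcMatrix' c)).Walk a a), w.IsCycle → 6 ≤ w.length := by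
    intro a w hw
    have h3 := hw.three_le_length
    have heven : (w.length : ZMod 2) = 0 := by
      have hp := tanner_parity (qcMatrix' c) w
      linear_combination hp
    have hdvd : 2 ∣ w.length := (ZMod.natCast_eq_zero_iff _ _).1 heven
    by_contra h6
    push_neg at h6
    have h4 : w.length = 4 := by omega
    clear h3 heven hdvd h6
    cases w with
    | nil => simp at h4
    | cons h1 p => cases p with
      | nil => simp at h4
      | cons h2 p => cases p with
        | nil => simp at h4
        | cons h3' p => cases p with
          | nil => simp at h4
          | cons h4' p => cases p with
            | cons h5 p => simp [SimpleGraph.Walk.length_cons] at h4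
            | nil =>
              have hnd := hw.support_nodup
              simp [SimpleGraph.Walk.support_cons, List.nodup_cons] at hnd
              obtain ⟨⟨hbc, hbd, hba⟩, ⟨hcd, hca⟩, hda⟩ := hnd
              rename_i b cc dd
              -- vertices : a, b, cc, dd with edges h1 : a-b, h2 : b-cc, h3' : cc-dd, h4' : dd-a
              cases a with
              | inl r1 =>
                obtain ⟨s1, rfl, hH1⟩ := hadjRL r1 _ h1
                obtain ⟨r2, rfl, hH2⟩ := hadjLR s1 _ h2
                obtain ⟨s2, rfl, hH3⟩ := hadjRL r2 _ h3'
                obtain ⟨r1', hEq, hH4⟩ := hadjLR s2 _ h4'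
                obtain rfl : r1 = r1' := Sum.inl.inj hEq
                refine main4 r1 r2 s1 s2 ?_ ?_ hH1 hH4 hH2 hH3
                · intro hh; exact hca (by rw [hh])
                · intro hh; exact hbd (by rw [hh])
              | inr s1 =>
                obtain ⟨r1, rfl, hH1⟩ := hadjLR s1 _ h1
                obtain ⟨s2, rfl, hH2⟩ := hadjRL r1 _ h2
                obtain ⟨r2, rfl, hH3⟩ := hadjLR s2 _ h3'
                obtain ⟨s1', hEq, hH4⟩ := hadjRL r2 _ h4'
                obtain rfl : s1 = s1' := Sum.inr.inj hEq
                refine main4 r1 r2 s1 s2 ?_ ?_ hH1 hH2 hH4 hH3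
                · intro hh; exact hbd (by rw [hh])
                · intro hh; exact hca (by rw [hh])
  -- the graph is not acyclic : explicit cycle
  have hnotacyclic : ¬ (tannerGraph (qcMatrix' c)).IsAcyclic := by
    set j0 : Fin J := ⟨0, by omega⟩ with hj0def
    set j1 : Fin J := ⟨1, by omega⟩ with hj1def
    set l0 : Fin (2 * m) := ⟨0, by omega⟩ with hl0def
    set l1 : Fin (2 * m) := ⟨1, by omega⟩ with hl1def
    have hj01 : j0 ≠ j1 := by simp [hj0def, hj1def, Fin.ext_iff]
    have hl01 : l0 ≠ l1 := by simp [hl0def, hl1def, Fin.ext_iff]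
    set d00 : ZMod P := c j0 l0 with hd00
    set d01 : ZMod P := c j0 l1 with hd01
    set d10 : ZMod P := c j1 l0 with hd10
    set d11 : ZMod P := c j1 l1 with hd11
    set δ : ZMod P := d00 + d11 - (d01 + d10) with hδdef
    have hδne : δ ≠ 0 := by
      rw [hδdef]
      exact sub_ne_zero.2 (keyNe j0 j1 l0 l1 (by simp [hj0def, hj1def])
        (by simp [hl0def, hl1def]))
    set k : ℕ := addOrderOf δ with hkdef
    have hk : 0 < k := addOrderOf_pos δ
    have hkδ : k • δ = 0 := addOrderOf_nsmul_eq_zero δ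
    have hsmul_inj : ∀ a b : ℕ, a < k → b < k → a • δ = b • δ → a = b := by
      intro a b ha hb hs
      exact nsmul_injOn_Iio_addOrderOf (by rw [← hkdef]; exact ha) (by rw [← hkdef]; exact hb) hs
    set φ : ZMod P → Fin P := fun x => ⟨x.val, ZMod.val_lt x⟩ with hφdef
    have hφ : ∀ x : ZMod P, ((φ x : ℕ) : ZMod P) = x := fun x => ZMod.natCast_rightInverse x
    have hφinj : Function.Injective φ := by
      intro x y hxy
      have := congrArg (fun z : Fin P => ((z : ℕ) : ZMod P)) hxy
      simp only [hφ] at this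
      exact this
    set g : ℕ → (Fin J × Fin P) ⊕ (Fin (2 * m) × Fin P) := fun i =>
      if i % 4 = 0 then Sum.inl (j0, φ ((i / 4) • δ))
      else if i % 4 = 1 then Sum.inr (l0, φ ((i / 4) • δ + d00))
      else if i % 4 = 2 then Sum.inl (j1, φ ((i / 4) • δ + (d00 - d10)))
      else Sum.inr (l1, φ ((i / 4) • δ + (d00 - d10 + d11))) with hgdef
    have hg0 : ∀ i, i % 4 = 0 → g i = Sum.inl (j0, φ ((i / 4) • δ)) := by
      intro i hi; rw [hgdef]; simp only; rw [if_pos hi]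
    have hg1 : ∀ i, i % 4 = 1 → g i = Sum.inr (l0, φ ((i / 4) • δ + d00)) := by
      intro i hi; rw [hgdef]; simp only; rw [if_neg (by omega), if_pos hi]
    have hg2 : ∀ i, i % 4 = 2 → g i = Sum.inl (j1, φ ((i / 4) • δ + (d00 - d10))) := by
      intro i hi; rw [hgdef]; simp only; rw [if_neg (by omega), if_neg (by omega), if_pos hi]
    have hg3 : ∀ i, i % 4 = 3 → g i = Sum.inr (l1, φ ((i / 4) • δ + (d00 - d10 + d11))) := by
      intro i hi; rw [hgdef]; simp only
      rw [if_neg (by omega), if_neg (by omega), if_neg (by omega)]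
    have hmod : ∀ x : ℕ, x % 4 = 0 ∨ x % 4 = 1 ∨ x % 4 = 2 ∨ x % 4 = 3 := by omega
    -- adjacency along the chain
    have hadjchain : ∀ i, i < 4 * k → (tannerGraph (qcMatrix' c)).Adj (g i) (g (i + 1)) := by
      intro i _
      rcases hmod i with hi | hi | hi | hi
      · rw [hg0 i hi, hg1 (i+1) (by omega), show (i+1)/4 = i/4 by omega]
        refine (tanner_adj_iff _ _ _).2 (Or.inl ⟨_, _, rfl, rfl, (tanner_entry_iff c _ _).2 ?_⟩)
        show ((φ ((i/4) • δ + d00) : ℕ) : ZMod P) - ((φ ((i/4) • δ) : ℕ) : ZMod P) = c j0 l0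
        rw [hφ, hφ, ← hd00]; ring
      · rw [hg1 i hi, hg2 (i+1) (by omega), show (i+1)/4 = i/4 by omega]
        refine (tanner_adj_iff _ _ _).2 (Or.inr ⟨_, _, rfl, rfl, (tanner_entry_iff c _ _).2 ?_⟩)
        show ((φ ((i/4) • δ + d00) : ℕ) : ZMod P) - ((φ ((i/4) • δ + (d00 - d10)) : ℕ) : ZMod P)
          = c j1 l0
        rw [hφ, hφ, ← hd10]; ring
      · rw [hg2 i hi, hg3 (i+1) (by omega), show (i+1)/4 = i/4 by omega]
        refine (tanner_adj_iff _ _ _).2 (Or.inl ⟨_, _, rfl, rfl, (tanner_entry_iff c _ _).2 ?_⟩)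
        show ((φ ((i/4) • δ + (d00 - d10 + d11)) : ℕ) : ZMod P)
          - ((φ ((i/4) • δ + (d00 - d10)) : ℕ) : ZMod P) = c j1 l1
        rw [hφ, hφ, ← hd11]; ring
      · rw [hg3 i hi, hg0 (i+1) (by omega), show (i+1)/4 = i/4 + 1 by omega]
        refine (tanner_adj_iff _ _ _).2 (Or.inr ⟨_, _, rfl, rfl, (tanner_entry_iff c _ _).2 ?_⟩)
        show ((φ ((i/4) • δ + (d00 - d10 + d11)) : ℕ) : ZMod P)
          - ((φ ((i/4 + 1) • δ) : ℕ) : ZMod P) = c j0 l1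
        rw [hφ, hφ, ← hd01, succ_nsmul]
        generalize (i / 4) • δ = x
        rw [hδdef]; ring
    have hclose : g (4 * k) = g 0 := by
      rw [hg0 (4*k) (by omega), hg0 0 (by omega), show 4*k/4 = k by omega, hkδ,
        Nat.zero_div, zero_nsmul]
    have hfinish : ∀ i j, i ≤ 4*k → j ≤ 4*k → i % 4 = j % 4 → (i/4) • δ = (j/4) • δ →
        i = j ∨ (i = 0 ∧ j = 4*k) ∨ (i = 4*k ∧ j = 0) := by
      intro i j hi hj hmodij hd
      rcases Nat.lt_or_ge (i/4) k with h1 | h1 <;> rcases Nat.lt_or_ge (j/4) k with h2 | h2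
      · left; have := hsmul_inj _ _ h1 h2 hd; omega
      · have hj4 : j = 4*k := by omega
        have hjk : j/4 = k := by omega
        rw [hjk, hkδ] at hd
        have hi0 : i/4 = 0 := hsmul_inj _ 0 h1 hk (by rw [zero_nsmul]; exact hd)
        right; left; constructor <;> omega
      · have hi4 : i = 4*k := by omega
        have hik : i/4 = k := by omega
        rw [hik, hkδ] at hd
        have hj0 : j/4 = 0 := hsmul_inj _ 0 h2 hk (by rw [zero_nsmul]; exact hd.symm)
        right; right; constructor <;> omega
      · left; omega
    have hinj : ∀ i j, i ≤ 4*k → j ≤ 4*k → g i = g j →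
        i = j ∨ (i = 0 ∧ j = 4*k) ∨ (i = 4*k ∧ j = 0) := by
      intro i j hi hj hgij
      rcases hmod i with hi0 | hi0 | hi0 | hi0 <;> rcases hmod j with hj0 | hj0 | hj0 | hj0
      · rw [hg0 i hi0, hg0 j hj0] at hgij
        simp only [Sum.inl.injEq, Prod.mk.injEq] at hgij
        exact hfinish i j hi hj (by omega) (hφinj hgij.2)
      · rw [hg0 i hi0, hg1 j hj0] at hgij; exact absurd hgij (by simp)
      · rw [hg0 i hi0, hg2 j hj0] at hgij
        simp only [Sum.inl.injEq, Prod.mk.injEq] at hgij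
        exact absurd hgij.1 hj01
      · rw [hg0 i hi0, hg3 j hj0] at hgij; exact absurd hgij (by simp)
      · rw [hg1 i hi0, hg0 j hj0] at hgij; exact absurd hgij (by simp)
      · rw [hg1 i hi0, hg1 j hj0] at hgij
        simp only [Sum.inr.injEq, Prod.mk.injEq] at hgij
        exact hfinish i j hi hj (by omega) (add_right_cancel (hφinj hgij.2))
      · rw [hg1 i hi0, hg2 j hj0] at hgij; exact absurd hgij (by simp)
      · rw [hg1 i hi0, hg3 j hj0] at hgij
        simp only [Sum.inr.injEq, Prod.mk.injEq] at hgij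
        exact absurd hgij.1 hl01
      · rw [hg2 i hi0, hg0 j hj0] at hgij
        simp only [Sum.inl.injEq, Prod.mk.injEq] at hgij
        exact absurd hgij.1 (Ne.symm hj01)
      · rw [hg2 i hi0, hg1 j hj0] at hgij; exact absurd hgij (by simp)
      · rw [hg2 i hi0, hg2 j hj0] at hgij
        simp only [Sum.inl.injEq, Prod.mk.injEq] at hgij
        exact hfinish i j hi hj (by omega) (add_right_cancel (hφinj hgij.2))
      · rw [hg2 i hi0, hg3 j hj0] at hgij; exact absurd hgij (by simp)
      · rw [hg3 i hi0, hg0 j hj0] at hgij; exact absurd hgij (by simp)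
      · rw [hg3 i hi0, hg1 j hj0] at hgij
        simp only [Sum.inr.injEq, Prod.mk.injEq] at hgij
        exact absurd hgij.1 (Ne.symm hl01)
      · rw [hg3 i hi0, hg2 j hj0] at hgij; exact absurd hgij (by simp)
      · rw [hg3 i hi0, hg3 j hj0] at hgij
        simp only [Sum.inr.injEq, Prod.mk.injEq] at hgij
        exact hfinish i j hi hj (by omega) (add_right_cancel (hφinj hgij.2))
    exact not_acyclic_of_chain' g (4 * k) (by omega) hadjchain hclose hinj
  -- conclusion
  have hle : (6 : ℕ∞) ≤ (tannerGraph (qcMatrix' c)).egirth := by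
    rw [SimpleGraph.le_egirth]
    intro a w hw
    exact_mod_cast hne6 a w hw
  have hnetop : (tannerGraph (qcMatrix' c)).egirth ≠ ⊤ :=
    fun htop => hnotacyclic (SimpleGraph.egirth_eq_top.1 htop)
  rw [SimpleGraph.girth]
  lift (tannerGraph (qcMatrix' c)).egirth to ℕ using hnetop with n hn
  rw [ENat.toNat_coe]
  exact_mod_cast hle

/-- for a perfume `(P, σ, τ)` with `m = ord_P(σ)`, `L = 2m`,
`2 ≤ J ≤ m`, and the model matrix `c_{j,l} = σ^{l−j}` (resp. `τ·σ^{l−j}`) for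
`l < m` (resp. `m ≤ l < L`), the Tanner graph of the associated `JP × LP`
QC-LDPC matrix has girth at least 6. -/
theorem perfume_girth_ge_six (P σ τ : ℕ) (h : IsPerfume P σ τ) (J : ℕ)
    (hJ : 2 ≤ J) (hJm : J ≤ ordP P σ)
    (c : Fin J → Fin (2 * ordP P σ) → ZMod P)
    (hc : ∀ j l, c j l =
      if (l : ℕ) < ordP P σ then
        (σ : ZMod P) ^ (l : ℕ) * ((σ : ZMod P)⁻¹) ^ (j : ℕ)
      else
        (τ : ZMod P) * ((σ : ZMod P) ^ (l : ℕ) * ((σ : ZMod P)⁻¹) ^ (j : ℕ))) :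
    6 ≤ (tannerGraph (qcMatrix' c)).girth := by
  obtain ⟨hP, hσ, hτ, ⟨hcop, hful⟩, hτcop, hτne⟩ := h
  haveI : NeZero P := ⟨hP.ne'⟩
  have hm2 : 2 ≤ ordP P σ := hJ.trans hJm
  have hord : orderOf ((σ : ZMod P)) = ordP P σ := rfl
  have hu : IsUnit ((σ : ZMod P)) := (ZMod.isUnit_iff_coprime σ P).2 hcop
  have ht : IsUnit ((τ : ZMod P)) := (ZMod.isUnit_iff_coprime τ P).2 hτcop
  have huv : (σ : ZMod P) * (σ : ZMod P)⁻¹ = 1 := ZMod.mul_inv_of_unit _ hu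
  have hvu : (σ : ZMod P)⁻¹ * (σ : ZMod P) = 1 := by rw [mul_comm]; exact huv
  have hv : IsUnit ((σ : ZMod P)⁻¹) := IsUnit.of_mul_eq_one _ hvu
  have hum : (σ : ZMod P) ^ ordP P σ = 1 := by rw [← hord]; exact pow_orderOf_eq_one _
  have hunit_sub : ∀ d, 1 ≤ d → d < ordP P σ → IsUnit ((σ : ZMod P) ^ d - 1) := by
    intro d h1 h2
    have hcd := hful d h1 h2
    have hone : 1 ≤ σ ^ d := Nat.one_le_pow _ _ hσ
    have := (ZMod.isUnit_iff_coprime (σ ^ d - 1) P).2 hcd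
    have hcast : (((σ : ℕ) ^ d - 1 : ℕ) : ZMod P) = (σ : ZMod P) ^ d - 1 := by
      rw [Nat.cast_sub hone]; push_cast; rfl
    rwa [hcast] at this
  have hpow_inj : ∀ a b, a < ordP P σ → b < ordP P σ →
      (σ : ZMod P) ^ a = (σ : ZMod P) ^ b → a = b := by
    intro a b ha hb hab
    exact pow_injOn_Iio_orderOf (by rw [hord]; exact ha) (by rw [hord]; exact hb) hab
  have hured : ∀ a, ordP P σ ≤ a → (σ : ZMod P) ^ a = (σ : ZMod P) ^ (a - ordP P σ) := by
    intro a ha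
    conv_lhs => rw [show a = (a - ordP P σ) + ordP P σ by omega]
    rw [pow_add, hum, mul_one]
  have noTau : ∀ a b, a < ordP P σ → b < ordP P σ →
      (τ : ZMod P) = (σ : ZMod P) ^ a * ((σ : ZMod P)⁻¹) ^ b → False := by
    intro a b ha hb heq
    have hvb : ((σ : ZMod P)⁻¹) ^ b * (σ : ZMod P) ^ b = 1 := by rw [← mul_pow, hvu, one_pow]
    have hmm : (σ : ZMod P) ^ b * (σ : ZMod P) ^ (ordP P σ - b) = 1 := by
      rw [← pow_add, show b + (ordP P σ - b) = ordP P σ by omega, hum]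
    have h1 : (τ : ZMod P) = (σ : ZMod P) ^ (a + (ordP P σ - b)) := by
      calc (τ : ZMod P) = (σ : ZMod P) ^ a * ((σ : ZMod P)⁻¹) ^ b := heq
        _ = (σ : ZMod P) ^ a * ((σ : ZMod P)⁻¹) ^ b
            * ((σ : ZMod P) ^ b * (σ : ZMod P) ^ (ordP P σ - b)) := by rw [hmm, mul_one]
        _ = (σ : ZMod P) ^ a * (((σ : ZMod P)⁻¹) ^ b * (σ : ZMod P) ^ b)
            * (σ : ZMod P) ^ (ordP P σ - b) := by ring
        _ = (σ : ZMod P) ^ (a + (ordP P σ - b)) := by rw [hvb, mul_one, ← pow_add]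
    by_cases him : a + (ordP P σ - b) ≤ ordP P σ
    · exact hτne (a + (ordP P σ - b)) (by omega) him h1
    · have h2 : (τ : ZMod P) = (σ : ZMod P) ^ (a + (ordP P σ - b) - ordP P σ) := by
        rw [h1]; exact hured _ (by omega)
      exact hτne (a + (ordP P σ - b) - ordP P σ) (by omega) (by omega) h2
  have cE : ∀ (j : Fin J) (l : Fin (2 * ordP P σ)),
      c j l = (if (l : ℕ) < ordP P σ then (1 : ZMod P) else (τ : ZMod P))
        * ((σ : ZMod P) ^ (l : ℕ) * ((σ : ZMod P)⁻¹) ^ (j : ℕ)) := by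
    intro j l
    rw [hc]
    split <;> ring
  exact perfume_girth_aux hJ hJm hm2 (σ : ZMod P) ((σ : ZMod P)⁻¹) (τ : ZMod P)
    huv hvu ht hv hpow_inj hunit_sub hured noTau c cE
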